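/- Let F_q be a finite field of odd characteristic, c, d ∈ F_qˣ, and let Ω be a field extension of F_q containing elements α and β with α² = −c and β² = 1 + 4d. Then the characteristic polynomial of the matrix t_{c,d}·x·w·u, viewed over Ω, factors as ∏_{ε ∈ {1,−1}} ∏_{δ ∈ {1,−1}} ( X − α(ε + δβ)/2 ). In particular, if d ≠ −1/4 and β ≠ 0, ±1 give distinct values, the matrix has four distinct eigenvalues in Ω. -/

import Mathlib

open Matrix

/-- The symplectic form `J`. -/
def Jmat (R : Type*) [CommRing R] : Matrix (Fin 4) (Fin 4) R :=
  !![0, 0, 0, 1; 0, 0, 1, 0; 0, -1, 0, 0; -1, 0, 0, 0]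

/-- `GSp(4,R)`: invertible matrices `g` with `gᵀ J g = μ(g) J` for some unit `μ(g)`. -/
def GSp4 (R : Type*) [CommRing R] : Set (Matrix (Fin 4) (Fin 4) R) :=
  {g | IsUnit g ∧ ∃ μ : Rˣ, gᵀ * Jmat R * g = (μ : R) • Jmat R}

/-- The set `M`: block matrices with rows `(a,b,0,0)`, `(c,d,0,0)`, `(0,0,λa,−λb)`,
`(0,0,−λc,λd)` with `λ` a unit and `ad − bc` a unit. -/
def Mset (R : Type*) [CommRing R] : Set (Matrix (Fin 4) (Fin 4) R) :=
  {g | ∃ a b c d lam : R, IsUnit lam ∧ IsUnit (a * d - b * c) ∧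
    g = !![a, b, 0, 0; c, d, 0, 0; 0, 0, lam * a, -(lam * b); 0, 0, -(lam * c), lam * d]}

/-- The element `u`. -/
def uEl (R : Type*) [CommRing R] : Matrix (Fin 4) (Fin 4) R :=
  !![0, 0, 1, 0; 0, 0, 0, -1; 1, 0, 0, 0; 0, -1, 0, 0]

/-- The torus element `t_{c,d} = diag(1, d, c, cd)`. -/
def tMat (R : Type*) [CommRing R] (c d : R) : Matrix (Fin 4) (Fin 4) R :=
  Matrix.diagonal ![1, d, c, c * d]

/-- The unipotent element `n_b`. -/
def nMat (R : Type*) [CommRing R] (b : R) : Matrix (Fin 4) (Fin 4) R :=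
  !![1, b, 0, 0; 0, 1, 0, 0; 0, 0, 1, -b; 0, 0, 0, 1]

/-- The element `x = n_1`. -/
def xEl (R : Type*) [CommRing R] : Matrix (Fin 4) (Fin 4) R := nMat R 1

/-- The Weyl element `w`. -/
def wEl (R : Type*) [CommRing R] : Matrix (Fin 4) (Fin 4) R :=
  !![0, 1, 0, 0; 1, 0, 0, 0; 0, 0, 0, 1; 0, 0, 1, 0]

/-- The torus `T = {t_{c,d} : c, d ∈ F_qˣ}`. -/
def Tset (Fq : Type*) [Field Fq] : Set (Matrix (Fin 4) (Fin 4) Fq) :=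
  {m | ∃ c d : Fq, c ≠ 0 ∧ d ≠ 0 ∧ m = tMat Fq c d}

/-- The unipotent group `N = {n_b : b ∈ F_q}`. -/
def Nset (Fq : Type*) [Field Fq] : Set (Matrix (Fin 4) (Fin 4) Fq) :=
  {m | ∃ b : Fq, m = nMat Fq b}

theorem my_det_fin_four {R : Type*} [CommRing R] (M : Matrix (Fin 4) (Fin 4) R) :
    M.det =
      M 0 0 * (M 1 1 * (M 2 2 * M 3 3 - M 2 3 * M 3 2) - M 1 2 * (M 2 1 * M 3 3 - M 2 3 * M 3 1)
        + M 1 3 * (M 2 1 * M 3 2 - M 2 2 * M 3 1)) -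
      M 0 1 * (M 1 0 * (M 2 2 * M 3 3 - M 2 3 * M 3 2) - M 1 2 * (M 2 0 * M 3 3 - M 2 3 * M 3 0)
        + M 1 3 * (M 2 0 * M 3 2 - M 2 2 * M 3 0)) +
      M 0 2 * (M 1 0 * (M 2 1 * M 3 3 - M 2 3 * M 3 1) - M 1 1 * (M 2 0 * M 3 3 - M 2 3 * M 3 0)
        + M 1 3 * (M 2 0 * M 3 1 - M 2 1 * M 3 0)) -
      M 0 3 * (M 1 0 * (M 2 1 * M 3 2 - M 2 2 * M 3 1) - M 1 1 * (M 2 0 * M 3 2 - M 2 2 * M 3 0)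
        + M 1 2 * (M 2 0 * M 3 1 - M 2 1 * M 3 0)) := by
  rw [Matrix.det_succ_row_zero, Fin.sum_univ_four]
  simp [Matrix.det_fin_three, Matrix.submatrix, Fin.succAbove,
    show (Fin.succ 2 : Fin 4) = 3 from rfl, show (Fin.castSucc 2 : Fin 4) = 2 from rfl,
    show ((2:Fin 4) < 3) from by decide,
    show ¬((2:Fin 4) < 2) from by decide, show ((3:Fin 4):ℕ) = 3 from rfl,
    show ((-1:R))^(3:ℕ) = -1 from by ring]
  ring

open Polynomial in
theorem my_charpoly_aux (Ω : Type*) [Field Ω] (A B : Ω) :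
    (!![0, 0, 1, -1; 0, 0, B, 0; -A, -A, 0, 0; A * B, 0, 0, 0] :
      Matrix (Fin 4) (Fin 4) Ω).charpoly =
      X ^ 4 + C (A + 2 * A * B) * X ^ 2 + C (A ^ 2 * B ^ 2) := by
  rw [Matrix.charpoly, my_det_fin_four]
  simp [charmatrix_apply_eq, charmatrix_apply_ne, Matrix.vecHead, Matrix.vecTail, map_ofNat]
  ring

open Polynomial in
/-- For `c, d ∈ F_qˣ` (`q` odd) and a field extension `Ω/F_q` containing
`α, β` with `α² = −c` and `β² = 1 + 4d`, the characteristic polynomial of `t_{c,d} x w u`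
over `Ω` factors as `∏_{ε,δ ∈ {±1}} (X − α(ε + δβ)/2)`; if moreover `d ≠ −1/4` the four
eigenvalues are pairwise distinct. -/
theorem charpoly_txwu_factors
    (Fq : Type*) [Field Fq] [Fintype Fq] (hchar : ringChar Fq ≠ 2)
    (c d : Fq) (hc : c ≠ 0) (hd : d ≠ 0)
    (Ω : Type*) [Field Ω] [Algebra Fq Ω] (α β : Ω)
    (hα : α ^ 2 = -(algebraMap Fq Ω c)) (hβ : β ^ 2 = 1 + 4 * algebraMap Fq Ω d) :
    ((tMat Fq c d * xEl Fq * wEl Fq * uEl Fq).map (algebraMap Fq Ω)).charpoly =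
      (X - C (α * (1 + β) / 2)) * (X - C (α * (1 - β) / 2)) *
        (X - C (α * (-1 + β) / 2)) * (X - C (α * (-1 - β) / 2)) ∧
    (d ≠ -(4⁻¹ : Fq) →
      List.Pairwise (· ≠ ·)
        [α * (1 + β) / 2, α * (1 - β) / 2, α * (-1 + β) / 2, α * (-1 - β) / 2]) := by
  set φ := algebraMap Fq Ω with hφ
  have hinj : Function.Injective φ := (algebraMap Fq Ω).injective
  set A := φ c with hA
  set B := φ d with hB
  have h2Fq : (2 : Fq) ≠ 0 := Ring.two_ne_zero hchar
  have h2 : (2 : Ω) ≠ 0 := by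
    have h22 : φ (2 : Fq) = (2 : Ω) := by rw [map_ofNat]
    intro h; exact h2Fq (hinj (by rw [h22, h, map_zero]))
  have h4 : (4 : Ω) ≠ 0 := by
    intro h; apply h2
    have h44 : (2 : Ω) * 2 = 0 := by rw [show (2:Ω)*2 = 4 from by norm_num, h]
    rcases mul_eq_zero.mp h44 with h' | h' <;> exact h'
  have h4Fq : (4 : Fq) ≠ 0 := by
    intro h; apply h2Fq
    have h44 : (2 : Fq) * 2 = 0 := by rw [show (2:Fq)*2 = 4 from by norm_num, h]
    rcases mul_eq_zero.mp h44 with h' | h' <;> exact h'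
  have hAne : A ≠ 0 := fun h => hc (hinj (by rw [map_zero, ← hA]; exact h))
  have hBne : B ≠ 0 := fun h => hd (hinj (by rw [map_zero, ← hB]; exact h))
  have hα0 : α ≠ 0 := by
    intro h
    rw [h] at hα
    exact hAne (by linear_combination hα)
  have hM : (tMat Fq c d * xEl Fq * wEl Fq * uEl Fq).map φ =
      !![0, 0, 1, -1; 0, 0, B, 0; -A, -A, 0, 0; A * B, 0, 0, 0] := by
    ext i j
    fin_cases i <;> fin_cases j <;>
      simp [tMat, xEl, nMat, wEl, uEl, Matrix.mul_apply, Fin.sum_univ_four, Matrix.diagonal,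
        Matrix.map_apply, _root_.map_mul, Matrix.vecHead, Matrix.vecTail, Function.comp,
        ← hA, ← hB]
  have e1 : (α * (1 + β) / 2) ^ 2 + (α * (1 - β) / 2) ^ 2 = -(A + 2 * A * B) := by
    rw [div_pow, div_pow, ← add_div, div_eq_iff (pow_ne_zero 2 h2)]
    linear_combination ((1 + β) ^ 2 + (1 - β) ^ 2) * hα + (-2 * A) * hβ
  have e2 : (α * (1 + β) / 2) ^ 2 * ((α * (1 - β) / 2) ^ 2) = A ^ 2 * B ^ 2 := by
    rw [div_pow, div_pow, div_mul_div_comm,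
      div_eq_iff (mul_ne_zero (pow_ne_zero 2 h2) (pow_ne_zero 2 h2))]
    linear_combination ((1 - β ^ 2) ^ 2 * (α ^ 2 - A)) * hα - (A ^ 2 * (1 - β ^ 2 - 4 * B)) * hβ
  constructor
  · rw [hM, my_charpoly_aux]
    rw [show α * (-1 + β) / 2 = -(α * (1 - β) / 2) from by ring,
        show α * (-1 - β) / 2 = -(α * (1 + β) / 2) from by ring, map_neg, map_neg]
    have key : (X - C (α * (1 + β) / 2)) * (X - C (α * (1 - β) / 2)) *
        (X - -C (α * (1 - β) / 2)) * (X - -C (α * (1 + β) / 2)) =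
        X ^ 4 - (C (α * (1 + β) / 2) ^ 2 + C (α * (1 - β) / 2) ^ 2) * X ^ 2
          + C (α * (1 + β) / 2) ^ 2 * C (α * (1 - β) / 2) ^ 2 := by ring
    rw [key,
      show C (α * (1 + β) / 2) ^ 2 + C (α * (1 - β) / 2) ^ 2 = -C (A + 2 * A * B) from by
        rw [← map_pow, ← map_pow, ← map_add, e1, map_neg],
      show C (α * (1 + β) / 2) ^ 2 * C (α * (1 - β) / 2) ^ 2 = C (A ^ 2 * B ^ 2) from by
        rw [← map_pow, ← map_pow, ← _root_.map_mul, e2]]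
    ring
  · intro hd4
    have hβ0 : β ≠ 0 := by
      intro h
      apply hd4
      rw [h] at hβ
      have h1 : φ ((4 : Fq) * d) = φ (-1 : Fq) := by
        rw [_root_.map_mul, map_ofNat, map_neg, _root_.map_one, ← hB]
        linear_combination -hβ
      have h2' : (4 : Fq) * d = -1 := hinj h1
      field_simp
      linear_combination h2'
    have hβ1 : β ≠ 1 := by
      intro h
      rw [h] at hβ
      have hz : (4 : Ω) * B = 0 := by linear_combination -hβ
      rcases mul_eq_zero.mp hz with h' | h'
      · exact h4 h'
      · exact hBne h'
    have hβm1 : β ≠ -1 := by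
      intro h
      rw [h] at hβ
      have hz : (4 : Ω) * B = 0 := by linear_combination -hβ
      rcases mul_eq_zero.mp hz with h' | h'
      · exact h4 h'
      · exact hBne h'
    have hp : (1 : Ω) + β ≠ 0 := fun h => hβm1 (by linear_combination h)
    have hm : (1 : Ω) - β ≠ 0 := fun h => hβ1 (by linear_combination -h)
    have key : ∀ y z : Ω, (4 : Ω) * y ≠ 0 → α * y / 2 ≠ α * z / 2 → True := fun _ _ _ _ => trivial
    refine List.Pairwise.cons ?_ (List.Pairwise.cons ?_ (List.Pairwise.cons ?_
      (List.pairwise_singleton _ _)))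
    · intro y hy
      simp only [List.mem_cons, List.mem_singleton, List.not_mem_nil, or_false] at hy
      rcases hy with rfl | rfl | rfl
      · intro h
        rw [div_eq_div_iff h2 h2] at h
        have hz : (4 : Ω) * (α * β) = 0 := by linear_combination h
        rcases mul_eq_zero.mp hz with h' | h'
        · exact h4 h'
        · rcases mul_eq_zero.mp h' with h'' | h'' <;> [exact hα0 h''; exact hβ0 h'']
      · intro h
        rw [div_eq_div_iff h2 h2] at h
        have hz : (4 : Ω) * α = 0 := by linear_combination h
        rcases mul_eq_zero.mp hz with h' | h'
        · exact h4 h'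
        · exact hα0 h'
      · intro h
        rw [div_eq_div_iff h2 h2] at h
        have hz : (4 : Ω) * (α * (1 + β)) = 0 := by linear_combination h
        rcases mul_eq_zero.mp hz with h' | h'
        · exact h4 h'
        · rcases mul_eq_zero.mp h' with h'' | h'' <;> [exact hα0 h''; exact hp h'']
    · intro y hy
      simp only [List.mem_cons, List.mem_singleton, List.not_mem_nil, or_false] at hy
      rcases hy with rfl | rfl
      · intro h
        rw [div_eq_div_iff h2 h2] at h
        have hz : (4 : Ω) * (α * (1 - β)) = 0 := by linear_combination h
        rcases mul_eq_zero.mp hz with h' | h'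
        · exact h4 h'
        · rcases mul_eq_zero.mp h' with h'' | h'' <;> [exact hα0 h''; exact hm h'']
      · intro h
        rw [div_eq_div_iff h2 h2] at h
        have hz : (4 : Ω) * α = 0 := by linear_combination h
        rcases mul_eq_zero.mp hz with h' | h'
        · exact h4 h'
        · exact hα0 h'
    · intro y hy
      simp only [List.mem_singleton] at hy
      subst hy
      intro h
      rw [div_eq_div_iff h2 h2] at h
      have hz : (4 : Ω) * (α * β) = 0 := by linear_combination h
      rcases mul_eq_zero.mp hz with h' | h'
      · exact h4 h'
      · rcases mul_eq_zero.mp h' with h'' | h'' <;> [exact hα0 h''; exact hβ0 h'']
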